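/- Conservation of total energy for resistive compressible MHD (Proposition 1a, spatially periodic setting): Let n, T : ℝ × ℝ³ → ℝ and V, B : ℝ × ℝ³ → ℝ³ be smooth and ℤ³-periodic in x, with n(t,x) > 0 everywhere, and let m_i > 0, μ₀ > 0, γ > 1, η ≥ 0 be constants. Define the diagnostic fields j := μ₀⁻¹ curl B and E := −V × B + η j. Assume that for all (t,x): (i) ∂ₜn + div(nV) = 0; (ii) ∂ₜV + (curl V) × V + ½∇|V|² + (m_i n)⁻¹ ∇(nT) − (m_i n)⁻¹ j × B = 0; (iii) (n/(γ−1))(∂ₜT + V·∇T) + nT div V = η|j|²; (iv) ∂ₜB + curl E = 0. Then the total energy H(t) = ∫_Q ( ½ m_i n |V|² + nT/(γ−1) + |B|²/(2μ₀) ) dx is constant in t, i.e. its time derivative is zero for all t. -/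

import Mathlib

open MeasureTheory

noncomputable section

/-- Points of ℝ³. -/
abbrev V3 := Fin 3 → ℝ

/-- Euclidean inner product on ℝ³. -/
def dot (u v : V3) : ℝ := ∑ i, u i * v i

/-- Cross product on ℝ³. -/
def cross (u v : V3) : V3 :=
  ![u 1 * v 2 - u 2 * v 1, u 2 * v 0 - u 0 * v 2, u 0 * v 1 - u 1 * v 0]

/-- i-th partial derivative of a scalar field. -/
def pd (i : Fin 3) (f : V3 → ℝ) (x : V3) : ℝ := fderiv ℝ f x (Pi.single i 1)

/-- Gradient of a scalar field. -/
def grad (f : V3 → ℝ) (x : V3) : V3 := fun i => pd i f x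

/-- Divergence of a vector field. -/
def div3 (u : V3 → V3) (x : V3) : ℝ := ∑ i, pd i (fun y => u y i) x

/-- Curl of a vector field. -/
def curl3 (u : V3 → V3) (x : V3) : V3 :=
  ![pd 1 (fun y => u y 2) x - pd 2 (fun y => u y 1) x,
    pd 2 (fun y => u y 0) x - pd 0 (fun y => u y 2) x,
    pd 0 (fun y => u y 1) x - pd 1 (fun y => u y 0) x]

/-- ℤ³-periodicity. -/
def Periodic3 {α : Type*} (f : V3 → α) : Prop :=
  ∀ (x : V3) (k : Fin 3 → ℤ), f (x + fun i => (k i : ℝ)) = f x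

/-- The unit cube Q = [0,1]³. -/
def Q3 : Set V3 := Set.Icc 0 1

/-- Current density $j = \mu_0^{-1} \nabla \times B$. -/
def jfield (μ₀ : ℝ) (B : ℝ × V3 → V3) (t : ℝ) (x : V3) : V3 :=
  μ₀⁻¹ • curl3 (fun y => B (t, y)) x

/-- Electric field $E = -V \times B + \eta j$. -/
def Efield (μ₀ η : ℝ) (V B : ℝ × V3 → V3) (t : ℝ) (x : V3) : V3 :=
  - cross (V (t, x)) (B (t, x)) + η • jfield μ₀ B t x

-- ===================== auxiliary lemmas =====================
section Aux

open Set

set_option maxHeartbeats 2000000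

/-! ### pd calculus -/

theorem pd_add (i : Fin 3) {f g : V3 → ℝ} {x : V3} (hf : DifferentiableAt ℝ f x)
    (hg : DifferentiableAt ℝ g x) :
    pd i (fun y => f y + g y) x = pd i f x + pd i g x := by
  simp [pd, fderiv_fun_add hf hg]

theorem pd_mul (i : Fin 3) {f g : V3 → ℝ} {x : V3} (hf : DifferentiableAt ℝ f x)
    (hg : DifferentiableAt ℝ g x) :
    pd i (fun y => f y * g y) x = pd i f x * g x + f x * pd i g x := by
  simp [pd, fderiv_fun_mul hf hg]; ring

theorem pd_sub (i : Fin 3) {f g : V3 → ℝ} {x : V3} (hf : DifferentiableAt ℝ f x)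
    (hg : DifferentiableAt ℝ g x) :
    pd i (fun y => f y - g y) x = pd i f x - pd i g x := by
  simp [pd, fderiv_fun_sub hf hg]

theorem pd_const_mul (i : Fin 3) (c : ℝ) {f : V3 → ℝ} {x : V3}
    (hf : DifferentiableAt ℝ f x) :
    pd i (fun y => c * f y) x = c * pd i f x := by
  simp [pd, fderiv_const_mul hf]

theorem contDiff_pd (i : Fin 3) {f : V3 → ℝ} (hf : ContDiff ℝ (⊤ : ℕ∞) f) :
    ContDiff ℝ (⊤ : ℕ∞) (pd i f) := by
  have h1 : ContDiff ℝ (⊤ : ℕ∞) (fderiv ℝ f) := hf.fderiv_right (m := (⊤ : ℕ∞)) (by simp)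
  exact (ContinuousLinearMap.apply ℝ ℝ (Pi.single i 1)).contDiff.comp h1

theorem contDiff_slice {E : Type*} [NormedAddCommGroup E] [NormedSpace ℝ E]
    {f : ℝ × V3 → E} (hf : ContDiff ℝ (⊤ : ℕ∞) f) (t : ℝ) :
    ContDiff ℝ (⊤ : ℕ∞) (fun x : V3 => f (t, x)) :=
  hf.comp (contDiff_const.prodMk contDiff_id)

theorem contDiff_tslice {E : Type*} [NormedAddCommGroup E] [NormedSpace ℝ E]
    {f : ℝ × V3 → E} (hf : ContDiff ℝ (⊤ : ℕ∞) f) (x : V3) :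
    ContDiff ℝ (⊤ : ℕ∞) (fun s : ℝ => f (s, x)) :=
  hf.comp (contDiff_id.prodMk contDiff_const)

theorem cd_apply {X : Type*} [NormedAddCommGroup X] [NormedSpace ℝ X]
    {f : X → V3} (hf : ContDiff ℝ (⊤ : ℕ∞) f) (i : Fin 3) :
    ContDiff ℝ (⊤ : ℕ∞) (fun p => f p i) :=
  (ContinuousLinearMap.proj (R := ℝ) (φ := fun _ : Fin 3 => ℝ) i).contDiff.comp hf

/-! ### dot / cross algebra -/

theorem dot_comm' (u v : V3) : dot u v = dot v u := by
  simp [dot, Fin.sum_univ_three]; ring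
theorem dot_add_right' (u v w : V3) : dot u (v + w) = dot u v + dot u w := by
  simp [dot, Fin.sum_univ_three]; ring
theorem dot_add_left' (u v w : V3) : dot (u + v) w = dot u w + dot v w := by
  simp [dot, Fin.sum_univ_three]; ring
theorem dot_sub_right' (u v w : V3) : dot u (v - w) = dot u v - dot u w := by
  simp [dot, Fin.sum_univ_three]; ring
theorem dot_neg_right' (u v : V3) : dot u (-v) = - dot u v := by
  simp [dot, Fin.sum_univ_three]
theorem dot_neg_left' (u v : V3) : dot (-u) v = - dot u v := by
  simp [dot, Fin.sum_univ_three]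
theorem dot_smul_right' (c : ℝ) (u v : V3) : dot u (c • v) = c * dot u v := by
  simp [dot, Fin.sum_univ_three, smul_eq_mul]; ring
theorem dot_smul_left' (c : ℝ) (u v : V3) : dot (c • u) v = c * dot u v := by
  simp [dot, Fin.sum_univ_three, smul_eq_mul]; ring
theorem dot_zero_right' (u : V3) : dot u 0 = 0 := by simp [dot]
theorem dot_cross_self'' (a b : V3) : dot b (cross a b) = 0 := by
  simp [dot, cross, Fin.sum_univ_three]; ring
theorem cross_dot_flip (u v w : V3) : dot (cross u v) w = - dot u (cross w v) := by
  simp [dot, cross, Fin.sum_univ_three]; ring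

/-! ### time-derivative helpers -/

theorem hasDerivAt_comp_proj {u : ℝ → V3} {u' : V3} {t : ℝ} (hu : HasDerivAt u u' t)
    (i : Fin 3) : HasDerivAt (fun s => u s i) (u' i) t :=
  (ContinuousLinearMap.proj (R := ℝ) (φ := fun _ : Fin 3 => ℝ) i).hasFDerivAt.comp_hasDerivAt t hu

theorem hasDerivAt_dot {u v : ℝ → V3} {u' v' : V3} {t : ℝ}
    (hu : HasDerivAt u u' t) (hv : HasDerivAt v v' t) :
    HasDerivAt (fun s => dot (u s) (v s)) (dot u' (v t) + dot (u t) v') t := by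
  have h : ∀ i : Fin 3, HasDerivAt (fun s => u s i * v s i) (u' i * v t i + u t i * v' i) t :=
    fun i => (hasDerivAt_comp_proj hu i).mul (hasDerivAt_comp_proj hv i)
  have h3 := ((h 0).add (h 1)).add (h 2)
  simp only [dot, Fin.sum_univ_three]
  exact h3.congr_deriv (by ring)

/-! ### div3 / grad calculus -/

theorem div3_smul {f : V3 → ℝ} {u : V3 → V3} {x : V3} (hf : DifferentiableAt ℝ f x)
    (hu : ∀ j, DifferentiableAt ℝ (fun y => u y j) x) :
    div3 (fun y => f y • u y) x = dot (grad f x) (u x) + f x * div3 u x := by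
  have h : ∀ i : Fin 3, pd i (fun y => (f y • u y) i) x
      = pd i f x * u x i + f x * pd i (fun y => u y i) x := by
    intro i
    have := pd_mul i hf (hu i)
    simpa [Pi.smul_apply, smul_eq_mul] using this
  simp only [div3, h, dot, grad, Finset.sum_add_distrib, Finset.mul_sum]

theorem div3_add' {u v : V3 → V3} {x : V3}
    (hu : ∀ j, DifferentiableAt ℝ (fun y => u y j) x)
    (hv : ∀ j, DifferentiableAt ℝ (fun y => v y j) x) :
    div3 (fun y => u y + v y) x = div3 u x + div3 v x := by
  have h : ∀ i : Fin 3, pd i (fun y => (u y + v y) i) x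
      = pd i (fun y => u y i) x + pd i (fun y => v y i) x := by
    intro i
    have := pd_add i (hu i) (hv i)
    simpa [Pi.add_apply] using this
  simp only [div3, h, Finset.sum_add_distrib]

theorem div3_const_smul {c : ℝ} {u : V3 → V3} {x : V3}
    (hu : ∀ j, DifferentiableAt ℝ (fun y => u y j) x) :
    div3 (fun y => c • u y) x = c * div3 u x := by
  have h : ∀ i : Fin 3, pd i (fun y => (c • u y) i) x
      = c * pd i (fun y => u y i) x := by
    intro i
    have := pd_const_mul i c (hu i)
    simpa [Pi.smul_apply, smul_eq_mul] using this
  simp only [div3, h, Finset.mul_sum]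

theorem grad_add' {f g : V3 → ℝ} {x : V3} (hf : DifferentiableAt ℝ f x)
    (hg : DifferentiableAt ℝ g x) :
    grad (fun y => f y + g y) x = grad f x + grad g x := by
  funext i; simp [grad, pd_add i hf hg]

theorem grad_const_mul {c : ℝ} {f : V3 → ℝ} {x : V3} (hf : DifferentiableAt ℝ f x) :
    grad (fun y => c * f y) x = c • grad f x := by
  funext i; simp [grad, pd_const_mul i c hf, smul_eq_mul]

theorem grad_mul {f g : V3 → ℝ} {x : V3} (hf : DifferentiableAt ℝ f x)
    (hg : DifferentiableAt ℝ g x) :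
    grad (fun y => f y * g y) x = g x • grad f x + f x • grad g x := by
  funext i
  simp [grad, pd_mul i hf hg, smul_eq_mul]
  ring

theorem div3_cross {u v : V3 → V3} {x : V3}
    (hu : ∀ j, DifferentiableAt ℝ (fun y => u y j) x)
    (hv : ∀ j, DifferentiableAt ℝ (fun y => v y j) x) :
    div3 (fun y => cross (u y) (v y)) x
      = dot (v x) (curl3 u x) - dot (u x) (curl3 v x) := by
  have e0 : pd 0 (fun y => cross (u y) (v y) 0) x
      = pd 0 (fun y => u y 1) x * v x 2 + u x 1 * pd 0 (fun y => v y 2) x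
        - (pd 0 (fun y => u y 2) x * v x 1 + u x 2 * pd 0 (fun y => v y 1) x) := by
    simp only [cross, Matrix.cons_val_zero]
    rw [pd_sub 0 ((hu 1).fun_mul (hv 2)) ((hu 2).fun_mul (hv 1)),
      pd_mul 0 (hu 1) (hv 2), pd_mul 0 (hu 2) (hv 1)]
  have e1 : pd 1 (fun y => cross (u y) (v y) 1) x
      = pd 1 (fun y => u y 2) x * v x 0 + u x 2 * pd 1 (fun y => v y 0) x
        - (pd 1 (fun y => u y 0) x * v x 2 + u x 0 * pd 1 (fun y => v y 2) x) := by
    simp only [cross, Matrix.cons_val_one, Matrix.head_cons, Matrix.cons_val_zero]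
    rw [pd_sub 1 ((hu 2).fun_mul (hv 0)) ((hu 0).fun_mul (hv 2)),
      pd_mul 1 (hu 2) (hv 0), pd_mul 1 (hu 0) (hv 2)]
  have e2 : pd 2 (fun y => cross (u y) (v y) 2) x
      = pd 2 (fun y => u y 0) x * v x 1 + u x 0 * pd 2 (fun y => v y 1) x
        - (pd 2 (fun y => u y 1) x * v x 0 + u x 1 * pd 2 (fun y => v y 0) x) := by
    simp only [cross, Matrix.cons_val_two, Matrix.tail_cons, Matrix.head_cons]
    rw [pd_sub 2 ((hu 0).fun_mul (hv 1)) ((hu 1).fun_mul (hv 0)),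
      pd_mul 2 (hu 0) (hv 1), pd_mul 2 (hu 1) (hv 0)]
  simp only [div3, Fin.sum_univ_three, e0, e1, e2, dot, curl3]
  simp [Fin.sum_univ_three]
  ring

end Aux
section Aux2
open Set
set_option maxHeartbeats 2000000

/-! ### smoothness of components -/

theorem contDiff_cross_comp {u v : V3 → V3}
    (hu : ∀ j, ContDiff ℝ (⊤ : ℕ∞) (fun y => u y j))
    (hv : ∀ j, ContDiff ℝ (⊤ : ℕ∞) (fun y => v y j)) (i : Fin 3) :
    ContDiff ℝ (⊤ : ℕ∞) (fun y => cross (u y) (v y) i) := by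
  fin_cases i <;>
    · simp only [cross, Fin.isValue, Matrix.cons_val_zero, Matrix.cons_val_one,
        Matrix.head_cons, Matrix.cons_val_two, Matrix.tail_cons]
      exact ((hu _).mul (hv _)).sub ((hu _).mul (hv _))

theorem contDiff_curl_comp {u : V3 → V3}
    (hu : ∀ j, ContDiff ℝ (⊤ : ℕ∞) (fun y => u y j)) (i : Fin 3) :
    ContDiff ℝ (⊤ : ℕ∞) (fun y => curl3 u y i) := by
  fin_cases i <;>
    · simp only [curl3, Fin.isValue, Matrix.cons_val_zero, Matrix.cons_val_one,
        Matrix.head_cons, Matrix.cons_val_two, Matrix.tail_cons]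
      exact (contDiff_pd _ (hu _)).sub (contDiff_pd _ (hu _))

theorem contDiff_j_comp {μ₀ : ℝ} {B : ℝ × V3 → V3} (hB : ContDiff ℝ (⊤ : ℕ∞) B)
    (t : ℝ) (i : Fin 3) : ContDiff ℝ (⊤ : ℕ∞) (fun y => jfield μ₀ B t y i) := by
  have h := contDiff_curl_comp (u := fun y => B (t, y))
    (fun j => cd_apply (contDiff_slice hB t) j) i
  simp only [jfield, Pi.smul_apply, smul_eq_mul]
  exact contDiff_const.mul h

theorem contDiff_E_comp {μ₀ η : ℝ} {V B : ℝ × V3 → V3}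
    (hV : ContDiff ℝ (⊤ : ℕ∞) V) (hB : ContDiff ℝ (⊤ : ℕ∞) B) (t : ℝ) (i : Fin 3) :
    ContDiff ℝ (⊤ : ℕ∞) (fun y => Efield μ₀ η V B t y i) := by
  have h1 := contDiff_cross_comp (u := fun y => V (t, y)) (v := fun y => B (t, y))
    (fun j => cd_apply (contDiff_slice hV t) j) (fun j => cd_apply (contDiff_slice hB t) j) i
  have h2 := contDiff_j_comp (μ₀ := μ₀) hB t i
  simp only [Efield, Pi.add_apply, Pi.neg_apply, Pi.smul_apply, smul_eq_mul]
  exact h1.neg.add (contDiff_const.mul h2)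

/-! ### periodicity -/

theorem pd_per {f : V3 → ℝ} (hf : Differentiable ℝ f) (hp : Periodic3 f) (i : Fin 3) :
    Periodic3 (pd i f) := by
  intro x k
  have hfe : (fun y => f (y + fun i => (k i : ℝ))) = f := funext fun y => hp y k
  have hshift : fderiv ℝ f (x + fun i => (k i : ℝ))
      = fderiv ℝ (fun y => f (y + fun i => (k i : ℝ))) x := by
    have h1 : HasFDerivAt (fun y : V3 => y + fun i => (k i : ℝ))
        (ContinuousLinearMap.id ℝ V3) x := (hasFDerivAt_id x).add_const _
    have h2 := ((hf _).hasFDerivAt :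
      HasFDerivAt f (fderiv ℝ f (x + fun i => (k i : ℝ))) (x + fun i => (k i : ℝ)))
    have h3 := h2.comp x h1
    rw [ContinuousLinearMap.comp_id] at h3
    exact (h3.fderiv).symm
  show fderiv ℝ f (x + fun i => (k i : ℝ)) (Pi.single i 1) = fderiv ℝ f x (Pi.single i 1)
  rw [hshift, hfe]

theorem per_comp {u : V3 → V3} (hp : Periodic3 u) (j : Fin 3) :
    Periodic3 (fun y => u y j) := fun x k => congrFun (hp x k) j

theorem curl3_per {u : V3 → V3} (hu : ∀ j, Differentiable ℝ (fun y => u y j))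
    (hp : Periodic3 u) : Periodic3 (fun y => curl3 u y) := by
  intro x k
  have hpij : ∀ i j : Fin 3, pd i (fun y => u y j) (x + fun i => (k i : ℝ))
      = pd i (fun y => u y j) x := fun i j => pd_per (hu j) (per_comp hp j) i x k
  simp only [curl3, hpij]

end Aux2
section Aux3
open Set
set_option maxHeartbeats 2000000

/-- The energy-flux vector field. -/
def flux (n T : ℝ × V3 → ℝ) (V B : ℝ × V3 → V3) (mi μ₀ γ η : ℝ) (t : ℝ) (y : V3) : V3 :=
  ((1 / 2 : ℝ) * mi * (n (t, y) * dot (V (t, y)) (V (t, y)))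
      + (γ / (γ - 1)) * (n (t, y) * T (t, y))) • V (t, y)
    + μ₀⁻¹ • cross (Efield μ₀ η V B t y) (B (t, y))

theorem contDiff_dotVV {V : ℝ × V3 → V3} (hV : ContDiff ℝ (⊤ : ℕ∞) V) (t : ℝ) :
    ContDiff ℝ (⊤ : ℕ∞) (fun y => dot (V (t, y)) (V (t, y))) := by
  have h : (fun y => dot (V (t, y)) (V (t, y)))
      = fun y => ∑ j : Fin 3, V (t, y) j * V (t, y) j := rfl
  rw [h]
  exact ContDiff.sum fun j _ =>
    (cd_apply (contDiff_slice hV t) j).mul (cd_apply (contDiff_slice hV t) j)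

theorem flux_contDiff {n T : ℝ × V3 → ℝ} {V B : ℝ × V3 → V3} {mi μ₀ γ η : ℝ}
    (hn : ContDiff ℝ (⊤ : ℕ∞) n) (hT : ContDiff ℝ (⊤ : ℕ∞) T)
    (hV : ContDiff ℝ (⊤ : ℕ∞) V) (hB : ContDiff ℝ (⊤ : ℕ∞) B) (t : ℝ) (i : Fin 3) :
    ContDiff ℝ (⊤ : ℕ∞) (fun y => flux n T V B mi μ₀ γ η t y i) := by
  have hc1 : ContDiff ℝ (⊤ : ℕ∞) (fun y => (1 / 2 : ℝ) * mi * (n (t, y)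
      * dot (V (t, y)) (V (t, y))) + (γ / (γ - 1)) * (n (t, y) * T (t, y))) :=
    (contDiff_const.mul ((contDiff_slice hn t).mul (contDiff_dotVV hV t))).add
      (contDiff_const.mul ((contDiff_slice hn t).mul (contDiff_slice hT t)))
  have hcr := contDiff_cross_comp (u := fun y => Efield μ₀ η V B t y)
    (v := fun y => B (t, y)) (fun j => contDiff_E_comp hV hB t j)
    (fun j => cd_apply (contDiff_slice hB t) j) i
  simp only [flux, Pi.add_apply, Pi.smul_apply, smul_eq_mul]
  exact (hc1.mul (cd_apply (contDiff_slice hV t) i)).add (contDiff_const.mul hcr)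

theorem flux_per {n T : ℝ × V3 → ℝ} {V B : ℝ × V3 → V3} {mi μ₀ γ η : ℝ}
    (hB : ContDiff ℝ (⊤ : ℕ∞) B)
    (hnper : ∀ t, Periodic3 (fun x => n (t, x))) (hTper : ∀ t, Periodic3 (fun x => T (t, x)))
    (hVper : ∀ t, Periodic3 (fun x => V (t, x))) (hBper : ∀ t, Periodic3 (fun x => B (t, x)))
    (t : ℝ) : Periodic3 (fun y => flux n T V B mi μ₀ γ η t y) := by
  intro x k
  have h1 : n (t, x + fun i => (k i : ℝ)) = n (t, x) := hnper t x k
  have h2 : T (t, x + fun i => (k i : ℝ)) = T (t, x) := hTper t x k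
  have h3 : V (t, x + fun i => (k i : ℝ)) = V (t, x) := hVper t x k
  have h4 : B (t, x + fun i => (k i : ℝ)) = B (t, x) := hBper t x k
  have hc : curl3 (fun y => B (t, y)) (x + fun i => (k i : ℝ))
      = curl3 (fun y => B (t, y)) x :=
    curl3_per (fun j => (cd_apply (contDiff_slice hB t) j).differentiable (by simp))
      (hBper t) x k
  simp only [flux, Efield, jfield, h1, h2, h3, h4, hc]

theorem integral_pd_zero (i : Fin 3) {f : V3 → ℝ} (hf : ContDiff ℝ (⊤ : ℕ∞) f)
    (hper : Periodic3 f) : ∫ x in Q3, pd i f x = 0 := by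
  have hle : (0 : Fin 3 → ℝ) ≤ 1 := fun _ => zero_le_one
  set F : V3 → V3 := fun x => Pi.single i (f x) with hF
  set F' : V3 → V3 →L[ℝ] V3 := fun x =>
    ContinuousLinearMap.pi (fun j => if j = i then fderiv ℝ f x else 0) with hF'
  have hdiv : ∀ x, (∑ j, F' x (Pi.single j 1) j) = pd i f x := by
    intro x
    rw [Finset.sum_eq_single i]
    · simp [F', ContinuousLinearMap.pi_apply, pd]
    · intro j _ hj
      simp [F', ContinuousLinearMap.pi_apply, hj]
    · simp
  have hFd : ∀ x, HasFDerivAt F (F' x) x := by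
    intro x
    have h : ∀ j, HasFDerivAt (fun y => F y j)
        ((if j = i then fderiv ℝ f x else 0 : V3 →L[ℝ] ℝ)) x := by
      intro j
      by_cases hj : j = i
      · subst hj
        simp only [F, Pi.single_eq_same, if_pos rfl]
        exact (hf.differentiable (by simp) x).hasFDerivAt
      · have he : (fun y : V3 => F y j) = fun _ => (0:ℝ) := by
          funext y; simp [F, Pi.single_eq_of_ne hj]
        rw [if_neg hj, he]
        exact hasFDerivAt_const 0 x
    exact hasFDerivAt_pi.2 h
  have key := integral_divergence_of_hasFDerivAt_off_countable
    (a := (0 : Fin 3 → ℝ)) (b := 1) hle F F' ∅ countable_empty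
    (Continuous.continuousOn (by
      apply continuous_pi; intro j
      by_cases hj : j = i
      · subst hj
        simpa [F] using hf.continuous
      · have he : (fun x : V3 => F x j) = fun _ => (0:ℝ) := by
          funext y; simp [F, Pi.single_eq_of_ne hj]
        rw [show (F : V3 → V3) = fun x => F x from rfl]
        exact (by rw [he]; exact continuous_const : Continuous fun x : V3 => F x j)))
    (fun x _ => hFd x)
    (by
      have hco : ContinuousOn (fun x => ∑ j, F' x (Pi.single j 1) j) (Icc 0 1) := by
        have hc : Continuous (pd i f) := by
          have h1 : ContDiff ℝ (⊤ : ℕ∞) (fderiv ℝ f) := hf.fderiv_right (m := (⊤ : ℕ∞)) (by simp)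
          exact ((ContinuousLinearMap.apply ℝ ℝ (Pi.single i 1)).contDiff.comp h1).continuous
        simp only [hdiv]
        exact hc.continuousOn
      exact hco.integrableOn_compact isCompact_Icc)
  rw [show Q3 = Icc (0 : Fin 3 → ℝ) 1 from rfl]
  simp only [hdiv] at key
  rw [key]
  apply Finset.sum_eq_zero
  intro j _
  by_cases hj : j = i
  · subst hj
    have hpt : ∀ y : Fin 2 → ℝ, F (Fin.insertNth j 1 y) j = F (Fin.insertNth j 0 y) j := by
      intro y
      have hadd : Fin.insertNth j (1:ℝ) y
          = Fin.insertNth j (0:ℝ) y + fun l => ((Pi.single j 1 : Fin 3 → ℤ) l : ℝ) := by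
        funext l
        by_cases h : l = j
        · subst h; simp
        · rcases Fin.exists_succAbove_eq h with ⟨m, rfl⟩
          simp [Fin.insertNth_apply_succAbove, Pi.single_eq_of_ne (Fin.succAbove_ne j m)]
      simp only [F, Pi.single_eq_same]
      rw [hadd, hper]
    simp [hpt]
  · have h0 : ∀ y : Fin 2 → ℝ, F (Fin.insertNth j 1 y) j = 0 := by
      intro y; simp [F, Pi.single_eq_of_ne hj]
    have h1 : ∀ y : Fin 2 → ℝ, F (Fin.insertNth j 0 y) j = 0 := by
      intro y; simp [F, Pi.single_eq_of_ne hj]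
    simp [h0, h1]

theorem q3_compact : IsCompact Q3 := isCompact_Icc
theorem q3_meas : MeasurableSet Q3 := measurableSet_Icc

theorem hasDerivAt_integral_Q3 {e : ℝ × V3 → ℝ} (he : ContDiff ℝ (⊤ : ℕ∞) e) (t : ℝ) :
    HasDerivAt (fun s => ∫ x in Q3, e (s, x))
      (∫ x in Q3, fderiv ℝ e (t, x) (1, 0)) t := by
  set eT : ℝ × V3 → ℝ := fun p => fderiv ℝ e p (1, 0) with heTdef
  have heT : Continuous eT :=
    ((ContinuousLinearMap.apply ℝ ℝ ((1:ℝ), (0:V3))).contDiff.comp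
      (he.fderiv_right (m := (⊤:ℕ∞)) (by simp))).continuous
  have hder : ∀ (s : ℝ) (x : V3), HasDerivAt (fun s' => e (s', x)) (eT (s, x)) s := by
    intro s x
    have h1 : HasFDerivAt e (fderiv ℝ e (s, x)) (s, x) :=
      (he.differentiable (by simp) _).hasFDerivAt
    have h2 : HasDerivAt (fun s' : ℝ => (s', x)) ((1:ℝ), (0:V3)) s :=
      (hasDerivAt_id s).prodMk (hasDerivAt_const s x)
    exact h1.comp_hasDerivAt s h2
  have hK : IsCompact (Icc (t-1) (t+1) ×ˢ Q3) := isCompact_Icc.prod q3_compact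
  obtain ⟨M, hM⟩ := hK.exists_bound_of_continuousOn heT.continuousOn
  have hQfin : volume Q3 < ⊤ := q3_compact.measure_lt_top
  have hcont_slice : ∀ s : ℝ, Continuous fun x : V3 => e (s, x) := fun s =>
    he.continuous.comp (continuous_const.prodMk continuous_id)
  have key := hasDerivAt_integral_of_dominated_loc_of_deriv_le
    (μ := volume.restrict Q3) (F := fun s x => e (s, x)) (F' := fun s x => eT (s, x))
    (x₀ := t) (bound := fun _ => |M| + 1) (s := Metric.ball t 1) (Metric.ball_mem_nhds t one_pos)
    (Filter.Eventually.of_forall fun s => ((hcont_slice s).aestronglyMeasurable))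
    (((hcont_slice t).continuousOn.integrableOn_compact q3_compact))
    ((heT.comp (continuous_const.prodMk continuous_id)).aestronglyMeasurable)
    (by
      refine (ae_restrict_mem q3_meas).mono fun x hx s hs => ?_
      have hmem : (s, x) ∈ Icc (t-1) (t+1) ×ˢ Q3 := by
        constructor
        · have hd := Metric.mem_ball.1 hs
          rw [Real.dist_eq] at hd
          constructor <;> [linarith [abs_lt.1 hd |>.1]; linarith [abs_lt.1 hd |>.2]]
        · exact hx
      calc ‖eT (s, x)‖ ≤ M := hM _ hmem
        _ ≤ |M| + 1 := by have := le_abs_self M; linarith)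
    (integrableOn_const hQfin.ne)
    (Filter.Eventually.of_forall fun x s _ => hder s x)
  exact key.2

end Aux3
section Aux4
set_option maxHeartbeats 4000000

theorem pointwise_energy
    (n T : ℝ × V3 → ℝ) (V B : ℝ × V3 → V3) (mi μ₀ γ η : ℝ)
    (hn : ContDiff ℝ (⊤ : ℕ∞) n) (hT : ContDiff ℝ (⊤ : ℕ∞) T)
    (hV : ContDiff ℝ (⊤ : ℕ∞) V) (hB : ContDiff ℝ (⊤ : ℕ∞) B)
    (t : ℝ) (x : V3)
    (hnx0 : n (t, x) ≠ 0) (hmi0 : mi ≠ 0) (hμ0 : μ₀ ≠ 0) (hγ0 : γ - 1 ≠ 0)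
    (h1 : deriv (fun s => n (s, x)) t
        + div3 (fun y => n (t, y) • V (t, y)) x = 0)
    (h2 : deriv (fun s => V (s, x)) t
        + cross (curl3 (fun y => V (t, y)) x) (V (t, x))
        + (1 / 2 : ℝ) • grad (fun y => dot (V (t, y)) (V (t, y))) x
        + (mi * n (t, x))⁻¹ • grad (fun y => n (t, y) * T (t, y)) x
        - (mi * n (t, x))⁻¹ • cross (jfield μ₀ B t x) (B (t, x)) = 0)
    (h3 : (n (t, x) / (γ - 1))
          * (deriv (fun s => T (s, x)) t
              + dot (V (t, x)) (grad (fun y => T (t, y)) x))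
        + n (t, x) * T (t, x) * div3 (fun y => V (t, y)) x
        = η * dot (jfield μ₀ B t x) (jfield μ₀ B t x))
    (h4 : deriv (fun s => B (s, x)) t
        + curl3 (fun y => Efield μ₀ η V B t y) x = 0) :
    deriv (fun s => (1 / 2 : ℝ) * mi * n (s, x) * dot (V (s, x)) (V (s, x))
        + n (s, x) * T (s, x) / (γ - 1)
        + dot (B (s, x)) (B (s, x)) / (2 * μ₀)) t
      = - div3 (fun y => flux n T V B mi μ₀ γ η t y) x := by
  have hD : ∀ {f : V3 → ℝ}, ContDiff ℝ (⊤ : ℕ∞) f → DifferentiableAt ℝ f x :=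
    fun hf => (hf.differentiable (by simp)).differentiableAt
  have cn := contDiff_slice hn t
  have cT := contDiff_slice hT t
  have cV : ∀ j, ContDiff ℝ (⊤ : ℕ∞) (fun y => V (t, y) j) :=
    fun j => cd_apply (contDiff_slice hV t) j
  have cB : ∀ j, ContDiff ℝ (⊤ : ℕ∞) (fun y => B (t, y) j) :=
    fun j => cd_apply (contDiff_slice hB t) j
  have cVV := contDiff_dotVV hV t
  have cE : ∀ j, ContDiff ℝ (⊤ : ℕ∞) (fun y => Efield μ₀ η V B t y j) :=
    fun j => contDiff_E_comp hV hB t j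
  have dV : ∀ j, DifferentiableAt ℝ (fun y => V (t, y) j) x := fun j => hD (cV j)
  have dB : ∀ j, DifferentiableAt ℝ (fun y => B (t, y) j) x := fun j => hD (cB j)
  have dE : ∀ j, DifferentiableAt ℝ (fun y => Efield μ₀ η V B t y j) x := fun j => hD (cE j)
  have cC1 : ContDiff ℝ (⊤ : ℕ∞) (fun y => (1 / 2 : ℝ) * mi * (n (t, y)
      * dot (V (t, y)) (V (t, y))) + (γ / (γ - 1)) * (n (t, y) * T (t, y))) :=
    (contDiff_const.mul (cn.mul cVV)).add (contDiff_const.mul (cn.mul cT))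
  have dC1 := hD cC1
  have hu1 : ∀ j, DifferentiableAt ℝ (fun y => (((1 / 2 : ℝ) * mi * (n (t, y)
      * dot (V (t, y)) (V (t, y))) + (γ / (γ - 1)) * (n (t, y) * T (t, y)))
        • V (t, y)) j) x := by
    intro j
    simpa [Pi.smul_apply, smul_eq_mul] using hD (cC1.mul (cV j))
  have hu2 : ∀ j, DifferentiableAt ℝ (fun y =>
      (μ₀⁻¹ • cross (Efield μ₀ η V B t y) (B (t, y))) j) x := by
    intro j
    simpa [Pi.smul_apply, smul_eq_mul] using
      hD (contDiff_const.mul (contDiff_cross_comp cE cB j))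
  have dEB : ∀ j, DifferentiableAt ℝ (fun y => cross (Efield μ₀ η V B t y) (B (t, y)) j) x :=
    fun j => hD (contDiff_cross_comp cE cB j)
  -- time derivatives
  have hnt : HasDerivAt (fun s => n (s, x)) (deriv (fun s => n (s, x)) t) t :=
    (((contDiff_tslice hn x).differentiable (by simp)) t).hasDerivAt
  have hTt : HasDerivAt (fun s => T (s, x)) (deriv (fun s => T (s, x)) t) t :=
    (((contDiff_tslice hT x).differentiable (by simp)) t).hasDerivAt
  have hVt : HasDerivAt (fun s => V (s, x)) (deriv (fun s => V (s, x)) t) t :=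
    (((contDiff_tslice hV x).differentiable (by simp)) t).hasDerivAt
  have hBt : HasDerivAt (fun s => B (s, x)) (deriv (fun s => B (s, x)) t) t :=
    (((contDiff_tslice hB x).differentiable (by simp)) t).hasDerivAt
  have hL := (((hnt.const_mul ((1 / 2 : ℝ) * mi)).fun_mul (hasDerivAt_dot hVt hVt)).fun_add
      ((hnt.fun_mul hTt).div_const (γ - 1))).fun_add ((hasDerivAt_dot hBt hBt).div_const (2 * μ₀))
  rw [hL.deriv]
  rw [dot_comm' (deriv (fun s => V (s, x)) t) (V (t, x)),
    dot_comm' (deriv (fun s => B (s, x)) t) (B (t, x))]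
  -- expand the divergence of the flux
  rw [show (fun y => flux n T V B mi μ₀ γ η t y)
      = (fun y => ((1 / 2 : ℝ) * mi * (n (t, y) * dot (V (t, y)) (V (t, y)))
          + (γ / (γ - 1)) * (n (t, y) * T (t, y))) • V (t, y)
        + μ₀⁻¹ • cross (Efield μ₀ η V B t y) (B (t, y))) from rfl]
  rw [div3_add' hu1 hu2, div3_smul dC1 dV, div3_const_smul dEB, div3_cross dE dB]
  rw [grad_add' (hD (contDiff_const.mul (cn.mul cVV))) (hD (contDiff_const.mul (cn.mul cT))),
    grad_const_mul (hD (cn.mul cVV)), grad_const_mul (hD (cn.mul cT)),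
    grad_mul (hD cn) (hD cVV), grad_mul (hD cn) (hD cT)]
  simp only [dot_add_left', dot_smul_left']
  -- the E·curlB identity
  have hcurlB : curl3 (fun y => B (t, y)) x = μ₀ • jfield μ₀ B t x := by
    rw [jfield, smul_smul, mul_inv_cancel₀ hμ0, one_smul]
  have hEdotB : dot (Efield μ₀ η V B t x) (curl3 (fun y => B (t, y)) x)
      = μ₀ * (dot (V (t, x)) (cross (jfield μ₀ B t x) (B (t, x)))
          + η * dot (jfield μ₀ B t x) (jfield μ₀ B t x)) := by
    rw [hcurlB, dot_smul_right']
    rw [show Efield μ₀ η V B t x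
        = - cross (V (t, x)) (B (t, x)) + η • jfield μ₀ B t x from rfl]
    rw [dot_add_left', dot_neg_left', dot_smul_left', cross_dot_flip]
    ring
  rw [hEdotB]
  -- process hypotheses
  simp only [div3_smul (hD cn) dV] at h1
  simp only [grad_mul (hD cn) (hD cT)] at h2
  have h2d := congrArg (fun w => dot (V (t, x)) w) h2
  simp only [dot_add_right', dot_sub_right', dot_smul_right', dot_zero_right',
    dot_cross_self'', add_zero, zero_add] at h2d
  rw [dot_comm' (V (t, x)) (grad (fun y => n (t, y)) x),
    dot_comm' (V (t, x)) (grad (fun y => T (t, y)) x),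
    dot_comm' (V (t, x)) (grad (fun y => dot (V (t, y)) (V (t, y))) x)] at h2d
  rw [dot_comm' (V (t, x)) (grad (fun y => T (t, y)) x)] at h3
  have h4d := congrArg (fun w => dot (B (t, x)) w) h4
  simp only [dot_add_right', dot_zero_right'] at h4d
  -- abbreviations for the final algebra
  have hmin : mi * n (t, x) ≠ 0 := mul_ne_zero hmi0 hnx0
  have hB2 : mi * n (t, x) * dot (V (t, x)) (deriv (fun s => V (s, x)) t)
      + (1 / 2 : ℝ) * (mi * n (t, x)) * dot (grad (fun y => dot (V (t, y)) (V (t, y))) x) (V (t, x))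
      + (T (t, x) * dot (grad (fun y => n (t, y)) x) (V (t, x))
          + n (t, x) * dot (grad (fun y => T (t, y)) x) (V (t, x)))
      - dot (V (t, x)) (cross (jfield μ₀ B t x) (B (t, x))) = 0 := by
    linear_combination (mi * n (t, x)) * h2d
      - (T (t, x) * dot (grad (fun y => n (t, y)) x) (V (t, x))
          + n (t, x) * dot (grad (fun y => T (t, y)) x) (V (t, x))
          - dot (V (t, x)) (cross (jfield μ₀ B t x) (B (t, x)))) * (mul_inv_cancel₀ hmin)
  -- clean the /(2μ₀) term
  have hhalf : ∀ z : ℝ, (z + z) / (2 * μ₀) = μ₀⁻¹ * z := by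
    intro z; field_simp; ring
  rw [hhalf]
  linear_combination
    ((1 / 2 : ℝ) * mi * dot (V (t, x)) (V (t, x)) + T (t, x) / (γ - 1)) * h1
    + hB2 + h3 + μ₀⁻¹ * h4d
    + (T (t, x) * dot (grad (fun y => n (t, y)) x) (V (t, x))
        + n (t, x) * dot (grad (fun y => T (t, y)) x) (V (t, x))
        + n (t, x) * T (t, x) * div3 (fun y => V (t, y)) x) * (mul_inv_cancel₀ hγ0)
    - (dot (V (t, x)) (cross (jfield μ₀ B t x) (B (t, x)))
        + η * dot (jfield μ₀ B t x) (jfield μ₀ B t x)) * (mul_inv_cancel₀ hμ0)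

end Aux4
set_option maxHeartbeats 4000000 in
/-- Proposition 1a: conservation of total energy for resistive compressible MHD,
spatially periodic setting. -/
theorem total_energy_conservation
    (n T : ℝ × V3 → ℝ) (V B : ℝ × V3 → V3)
    (mi μ₀ γ η : ℝ)
    (hn : ContDiff ℝ (⊤ : ℕ∞) n) (hT : ContDiff ℝ (⊤ : ℕ∞) T)
    (hV : ContDiff ℝ (⊤ : ℕ∞) V) (hB : ContDiff ℝ (⊤ : ℕ∞) B)
    (hnper : ∀ t, Periodic3 (fun x => n (t, x)))
    (hTper : ∀ t, Periodic3 (fun x => T (t, x)))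
    (hVper : ∀ t, Periodic3 (fun x => V (t, x)))
    (hBper : ∀ t, Periodic3 (fun x => B (t, x)))
    (hnpos : ∀ t x, 0 < n (t, x))
    (hmi : 0 < mi) (hμ : 0 < μ₀) (hγ : 1 < γ) (hη : 0 ≤ η)
    (heq1 : ∀ t x, deriv (fun s => n (s, x)) t
        + div3 (fun y => n (t, y) • V (t, y)) x = 0)
    (heq2 : ∀ t x, deriv (fun s => V (s, x)) t
        + cross (curl3 (fun y => V (t, y)) x) (V (t, x))
        + (1 / 2 : ℝ) • grad (fun y => dot (V (t, y)) (V (t, y))) x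
        + (mi * n (t, x))⁻¹ • grad (fun y => n (t, y) * T (t, y)) x
        - (mi * n (t, x))⁻¹ • cross (jfield μ₀ B t x) (B (t, x)) = 0)
    (heq3 : ∀ t x, (n (t, x) / (γ - 1))
          * (deriv (fun s => T (s, x)) t
              + dot (V (t, x)) (grad (fun y => T (t, y)) x))
        + n (t, x) * T (t, x) * div3 (fun y => V (t, y)) x
        = η * dot (jfield μ₀ B t x) (jfield μ₀ B t x))
    (heq4 : ∀ t x, deriv (fun s => B (s, x)) t
        + curl3 (fun y => Efield μ₀ η V B t y) x = 0) :
    ∀ t, deriv (fun s => ∫ x in Q3,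
        ((1 / 2 : ℝ) * mi * n (s, x) * dot (V (s, x)) (V (s, x))
          + n (s, x) * T (s, x) / (γ - 1)
          + dot (B (s, x)) (B (s, x)) / (2 * μ₀))) t = 0 := by
  intro t
  have hdotj : ∀ (W : ℝ × V3 → V3), ContDiff ℝ (⊤ : ℕ∞) W →
      ContDiff ℝ (⊤ : ℕ∞) (fun p : ℝ × V3 => dot (W p) (W p)) := by
    intro W hW
    have h : (fun p : ℝ × V3 => dot (W p) (W p))
        = fun p => ∑ j : Fin 3, W p j * W p j := rfl
    rw [h]
    exact ContDiff.sum fun j _ => (cd_apply hW j).mul (cd_apply hW j)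
  have he : ContDiff ℝ (⊤ : ℕ∞) (fun p : ℝ × V3 =>
      (1 / 2 : ℝ) * mi * n p * dot (V p) (V p) + n p * T p / (γ - 1)
        + dot (B p) (B p) / (2 * μ₀)) :=
    (((contDiff_const.mul hn).mul (hdotj V hV)).add ((hn.mul hT).div_const (γ - 1))).add
      ((hdotj B hB).div_const (2 * μ₀))
  have hkey := hasDerivAt_integral_Q3 he t
  rw [hkey.deriv]
  have hpt : ∀ x : V3, fderiv ℝ (fun p : ℝ × V3 =>
      (1 / 2 : ℝ) * mi * n p * dot (V p) (V p) + n p * T p / (γ - 1)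
        + dot (B p) (B p) / (2 * μ₀)) (t, x) (1, 0)
      = - div3 (fun y => flux n T V B mi μ₀ γ η t y) x := by
    intro x
    have hslice : HasDerivAt (fun s => (1 / 2 : ℝ) * mi * n (s, x)
          * dot (V (s, x)) (V (s, x)) + n (s, x) * T (s, x) / (γ - 1)
          + dot (B (s, x)) (B (s, x)) / (2 * μ₀))
        (fderiv ℝ (fun p : ℝ × V3 =>
          (1 / 2 : ℝ) * mi * n p * dot (V p) (V p) + n p * T p / (γ - 1)
            + dot (B p) (B p) / (2 * μ₀)) (t, x) (1, 0)) t := by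
      have hfd := (he.differentiable (by simp) ((t : ℝ), x)).hasFDerivAt
      have h2 : HasDerivAt (fun s : ℝ => (s, x)) ((1:ℝ), (0:V3)) t :=
        (hasDerivAt_id t).prodMk (hasDerivAt_const t x)
      exact hfd.comp_hasDerivAt t h2
    rw [← hslice.deriv]
    exact pointwise_energy n T V B mi μ₀ γ η hn hT hV hB t x (hnpos t x).ne'
      (ne_of_gt hmi) (ne_of_gt hμ) (by linarith)
      (heq1 t x) (heq2 t x) (heq3 t x) (heq4 t x)
  simp only [hpt]
  rw [MeasureTheory.integral_neg]
  have hzero : ∫ x in Q3, div3 (fun y => flux n T V B mi μ₀ γ η t y) x = 0 := by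
    have hexp : (fun x => div3 (fun y => flux n T V B mi μ₀ γ η t y) x)
        = fun x => ∑ i : Fin 3, pd i (fun y => flux n T V B mi μ₀ γ η t y i) x := rfl
    rw [hexp, MeasureTheory.integral_finset_sum Finset.univ (fun i _ =>
      ((contDiff_pd i (flux_contDiff hn hT hV hB t i)).continuous.continuousOn.integrableOn_compact
        q3_compact))]
    exact Finset.sum_eq_zero fun i _ => integral_pd_zero i (flux_contDiff hn hT hV hB t i)
      (per_comp (flux_per hB hnper hTper hVper hBper t) i)
  rw [hzero, neg_zero]
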